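/- Abstract inf-sup stability: let X, M be real Hilbert spaces with norms ‖·‖_X, ‖·‖_M, and let A(u,λ;v,μ) = a(u,v) + b(λ,v) + b(μ,u) - c(λ,μ), where a is coercive on X with constant α > 0 and bounded, b is bounded, c satisfies c(η,η) ≥ -ε‖η‖²_M with ε small, and the inf-sup condition holds: for every η ∈ M there exists v_η ∈ X with b(η, v_η) ≥ β‖η‖²_M and ‖v_η‖_X ≤ C‖η‖_M. Then there exist constants such that for every (y,η) there exists (v,μ) with ‖(v,μ)‖ ≤ C₁‖(y,η)‖ and A(y,η;v,μ) ≥ C₂(‖y‖²_X + ‖η‖²_M), provided ε < ε₀(α, β, C). -/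

import Mathlib

set_option maxHeartbeats 1000000

/-- Abstract inf-sup stability (Proposition 3.1): under coercivity of `a`,
boundedness of `a`, `b`, an inf-sup condition for `b`, and a small negative
part of `c`, for every `(y,η)` there exists a test pair `(v,μ)` bounded by
`(y,η)` for which the form `A` is coercive. -/
theorem abstract_infsup_stability
    {X M : Type*}
    [NormedAddCommGroup X] [InnerProductSpace ℝ X] [CompleteSpace X]
    [NormedAddCommGroup M] [InnerProductSpace ℝ M] [CompleteSpace M]
    (a : X →L[ℝ] X →L[ℝ] ℝ) (b : M →L[ℝ] X →L[ℝ] ℝ) (c : M →L[ℝ] M →L[ℝ] ℝ)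
    (α β Cb C : ℝ) (hα : 0 < α) (hβ : 0 < β) (hCb : 0 < Cb) (hC : 0 < C)
    (hasymm : ∀ u v, a u v = a v u)
    (hacoer : ∀ y : X, a y y ≥ α * ‖y‖ ^ 2)
    (hbbdd : ∀ (η : M) (v : X), |b η v| ≤ Cb * ‖η‖ * ‖v‖)
    (hcsymm : ∀ lam μ, c lam μ = c μ lam)
    (hinfsup : ∀ η : M, ∃ v : X, b η v ≥ β * ‖η‖ ^ 2 ∧ ‖v‖ ≤ C * ‖η‖) :
    ∃ ε₀ C₁ C₂ : ℝ, 0 < ε₀ ∧ 0 < C₁ ∧ 0 < C₂ ∧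
      ∀ ε : ℝ, 0 ≤ ε → ε < ε₀ →
        (∀ η : M, c η η ≥ -ε * ‖η‖ ^ 2) →
        ∀ (y : X) (η : M), ∃ (v : X) (μ : M),
          ‖v‖ ^ 2 + ‖μ‖ ^ 2 ≤ C₁ ^ 2 * (‖y‖ ^ 2 + ‖η‖ ^ 2) ∧
          a y v + b η v + b μ y - c η μ ≥ C₂ * (‖y‖ ^ 2 + ‖η‖ ^ 2) := by
  obtain ⟨Ca, hCa, habdd⟩ :
      ∃ Ca : ℝ, 0 < Ca ∧ ∀ (u v : X), |a u v| ≤ Ca * ‖u‖ * ‖v‖ := by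
    refine ⟨‖a‖ + 1, by positivity, fun u v => ?_⟩
    have h1 : ‖a u v‖ ≤ ‖a u‖ * ‖v‖ := (a u).le_opNorm v
    have h2 : ‖a u‖ ≤ ‖a‖ * ‖u‖ := a.le_opNorm u
    have h3 : ‖a u v‖ ≤ (‖a‖ * ‖u‖) * ‖v‖ :=
      h1.trans (mul_le_mul_of_nonneg_right h2 (norm_nonneg _))
    have hnn : 0 ≤ ‖u‖ * ‖v‖ := by positivity
    calc |a u v| = ‖a u v‖ := rfl
      _ ≤ (‖a‖ * ‖u‖) * ‖v‖ := h3
      _ ≤ (‖a‖ + 1) * ‖u‖ * ‖v‖ := by nlinarith [norm_nonneg a]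
  obtain ⟨δ, hδ, hδeq⟩ : ∃ δ : ℝ, 0 < δ ∧ δ * (Ca * C) ^ 2 = α * β :=
    ⟨α * β / (Ca * C) ^ 2, by positivity, div_mul_cancel₀ _ (by positivity)⟩
  refine ⟨δ * β / 4, 3 + 2 * δ ^ 2 * C ^ 2, min (α / 2) (δ * β / 4),
    by positivity, by positivity, lt_min (by positivity) (by positivity),
    fun ε hε0 hεlt hc y η => ?_⟩
  obtain ⟨w, hbw, hwnorm⟩ := hinfsup η
  have hw0 : 0 ≤ ‖w‖ := norm_nonneg _
  have hη0 : 0 ≤ ‖η‖ := norm_nonneg _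
  have hy0 : 0 ≤ ‖y‖ := norm_nonneg _
  refine ⟨y + δ • w, -η, ?_, ?_⟩
  · -- norm bound
    have h1 : ‖y + δ • w‖ ≤ ‖y‖ + δ * ‖w‖ := by
      calc ‖y + δ • w‖ ≤ ‖y‖ + ‖δ • w‖ := norm_add_le _ _
        _ = ‖y‖ + δ * ‖w‖ := by rw [norm_smul, Real.norm_of_nonneg hδ.le]
    have h2 : ‖y + δ • w‖ ^ 2 ≤ 2 * ‖y‖ ^ 2 + 2 * δ ^ 2 * C ^ 2 * ‖η‖ ^ 2 := by
      have hub : ‖y + δ • w‖ ^ 2 ≤ (‖y‖ + δ * ‖w‖) ^ 2 :=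
        pow_le_pow_left₀ (norm_nonneg _) h1 2
      have hw2 : ‖w‖ ^ 2 ≤ C ^ 2 * ‖η‖ ^ 2 := by
        nlinarith [mul_self_le_mul_self hw0 hwnorm]
      have hδw : δ ^ 2 * ‖w‖ ^ 2 ≤ δ ^ 2 * (C ^ 2 * ‖η‖ ^ 2) :=
        mul_le_mul_of_nonneg_left hw2 (sq_nonneg δ)
      nlinarith [sq_nonneg (‖y‖ - δ * ‖w‖)]
    rw [norm_neg]
    have hs : (0:ℝ) ≤ δ ^ 2 * C ^ 2 := by positivity
    have step1 : 2 * ‖y‖ ^ 2 + 2 * δ ^ 2 * C ^ 2 * ‖η‖ ^ 2 + ‖η‖ ^ 2 ≤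
        (3 + 2 * δ ^ 2 * C ^ 2) * (‖y‖ ^ 2 + ‖η‖ ^ 2) := by
      nlinarith [mul_nonneg hs (sq_nonneg ‖y‖), sq_nonneg ‖y‖, sq_nonneg ‖η‖]
    have step2 : (3 + 2 * δ ^ 2 * C ^ 2) * (‖y‖ ^ 2 + ‖η‖ ^ 2) ≤
        (3 + 2 * δ ^ 2 * C ^ 2) ^ 2 * (‖y‖ ^ 2 + ‖η‖ ^ 2) := by
      have h3 : (3 + 2 * δ ^ 2 * C ^ 2) ≤ (3 + 2 * δ ^ 2 * C ^ 2) ^ 2 := by nlinarith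
      exact mul_le_mul_of_nonneg_right h3 (by positivity)
    linarith
  · -- coercivity
    have e1 : a y (y + δ • w) = a y y + δ * a y w := by
      simp [(a y).map_add, (a y).map_smul]
    have e2 : b η (y + δ • w) = b η y + δ * b η w := by
      simp [(b η).map_add, (b η).map_smul]
    have e3 : b (-η) y = -(b η y) := by rw [b.map_neg]; simp
    have e4 : c η (-η) = -(c η η) := (c η).map_neg η
    rw [e1, e2, e3, e4]
    have hcη := hc η
    have hac := hacoer y
    have hyw : Ca * ‖y‖ * ‖w‖ ≤ Ca * C * ‖y‖ * ‖η‖ := by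
      have := mul_le_mul_of_nonneg_left hwnorm (mul_nonneg hCa.le hy0)
      nlinarith
    have key2 : δ ^ 2 * (Ca * C) ^ 2 * ‖η‖ ^ 2 = δ * (α * β) * ‖η‖ ^ 2 := by
      rw [show δ ^ 2 * (Ca * C) ^ 2 = δ * (δ * (Ca * C) ^ 2) from by ring, hδeq]
    have amgm : δ * (Ca * C * ‖y‖ * ‖η‖) ≤ α / 2 * ‖y‖ ^ 2 + δ * β / 2 * ‖η‖ ^ 2 := by
      have h2α : (0:ℝ) < 2 * α := by linarith
      rw [← mul_le_mul_iff_right₀ h2α]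
      nlinarith [sq_nonneg (α * ‖y‖ - δ * (Ca * C) * ‖η‖), key2]
    have hεb : ε * ‖η‖ ^ 2 ≤ δ * β / 4 * ‖η‖ ^ 2 := by
      nlinarith [sq_nonneg ‖η‖]
    have hmin1 : min (α / 2) (δ * β / 4) ≤ α / 2 := min_le_left _ _
    have hmin2 : min (α / 2) (δ * β / 4) ≤ δ * β / 4 := min_le_right _ _
    have hayw' : -(Ca * ‖y‖ * ‖w‖) ≤ a y w := neg_le_of_abs_le (habdd y w)
    have t1 : δ * (-(Ca * ‖y‖ * ‖w‖)) ≤ δ * a y w :=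
      mul_le_mul_of_nonneg_left hayw' hδ.le
    have t2 : δ * (Ca * ‖y‖ * ‖w‖) ≤ δ * (Ca * C * ‖y‖ * ‖η‖) :=
      mul_le_mul_of_nonneg_left hyw hδ.le
    have t3 : δ * (β * ‖η‖ ^ 2) ≤ δ * b η w := mul_le_mul_of_nonneg_left hbw hδ.le
    have t4 := mul_le_mul_of_nonneg_right hmin1 (sq_nonneg ‖y‖)
    have t5 := mul_le_mul_of_nonneg_right hmin2 (sq_nonneg ‖η‖)
    nlinarith [t1, t2, t3, t4, t5, amgm, hεb, hac, hcη]
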